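/- Fix α > 0, κ ≥ 0 and an index j ≥ 1. Let (X_i)_{i≥1} be independent random variables on a probability space such that X_i has the Beta(1, α + κ·δ(i = j)) law, i.e. X_i has density x ↦ β_i (1−x)^{β_i − 1} on [0,1] with β_i = α + κ if i = j and β_i = α otherwise. Define the agile stick-breaking weights a_i = X_i ∏_{n=1}^{i−1} (1 − X_n). Then ∑_{i=1}^∞ a_i = 1 almost surely. -/

import Mathlib

open MeasureTheory ProbabilityTheory
open scoped ENNReal NNReal

/-- For `b > 0`, the measure `Beta(1, b)` on `ℝ`, with density `x ↦ b (1−x)^(b−1)` on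
`[0,1]` (and `0` elsewhere) with respect to Lebesgue measure. -/
noncomputable def betaOne (b : ℝ) : Measure ℝ :=
  volume.withDensity fun x =>
    ENNReal.ofReal (if x ∈ Set.Icc (0 : ℝ) 1 then b * (1 - x) ^ (b - 1) else 0)

lemma betaOne_density_measurable (b : ℝ) :
    Measurable fun x : ℝ =>
      ENNReal.ofReal (if x ∈ Set.Icc (0 : ℝ) 1 then b * (1 - x) ^ (b - 1) else 0) := by
  apply Measurable.ennreal_ofReal
  apply Measurable.ite measurableSet_Icc _ measurable_const
  fun_prop

lemma betaOne_compl_Icc (b : ℝ) : betaOne b (Set.Icc (0 : ℝ) 1)ᶜ = 0 := by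
  rw [betaOne, withDensity_apply _ measurableSet_Icc.compl]
  have h0 : ∀ᵐ x ∂(volume.restrict (Set.Icc (0:ℝ) 1)ᶜ),
      ENNReal.ofReal (if x ∈ Set.Icc (0:ℝ) 1 then b * (1 - x) ^ (b - 1) else 0) = 0 := by
    filter_upwards [ae_restrict_mem measurableSet_Icc.compl] with x hx
    rw [if_neg hx, ENNReal.ofReal_zero]
  rw [lintegral_congr_ae h0, lintegral_zero]

lemma betaOne_Ici_pos {b : ℝ} (hb : 0 < b) : 0 < betaOne b (Set.Ici (2⁻¹ : ℝ)) := by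
  set m : ℝ := min ((4⁻¹ : ℝ) ^ (b - 1)) ((2⁻¹ : ℝ) ^ (b - 1)) with hm
  have hm_pos : 0 < m := lt_min (Real.rpow_pos_of_pos (by norm_num) _)
    (Real.rpow_pos_of_pos (by norm_num) _)
  have key : ∀ x ∈ Set.Icc (2⁻¹ : ℝ) (3/4 : ℝ),
      ENNReal.ofReal (b * m) ≤
        ENNReal.ofReal (if x ∈ Set.Icc (0 : ℝ) 1 then b * (1 - x) ^ (b - 1) else 0) := by
    intro x hx
    have hx01 : x ∈ Set.Icc (0 : ℝ) 1 := ⟨by linarith [hx.1], by linarith [hx.2]⟩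
    rw [if_pos hx01]
    apply ENNReal.ofReal_le_ofReal
    apply mul_le_mul_of_nonneg_left _ hb.le
    have h1 : (4⁻¹ : ℝ) ≤ 1 - x := by linarith [hx.2]
    have h2 : 1 - x ≤ (2⁻¹ : ℝ) := by linarith [hx.1]
    rcases le_or_gt 0 (b - 1) with h | h
    · exact le_trans (min_le_left _ _) (Real.rpow_le_rpow (by norm_num) h1 h)
    · refine le_trans (min_le_right _ _) ?_
      exact Real.rpow_le_rpow_of_nonpos (by linarith) h2 h.le
  have h1 : betaOne b (Set.Ici (2⁻¹ : ℝ)) ≥ betaOne b (Set.Icc (2⁻¹ : ℝ) (3/4)) :=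
    measure_mono (fun x hx => hx.1)
  have h2 : ENNReal.ofReal (b * m) * volume (Set.Icc (2⁻¹ : ℝ) (3/4)) ≤
      betaOne b (Set.Icc (2⁻¹ : ℝ) (3/4)) := by
    rw [betaOne, withDensity_apply _ measurableSet_Icc]
    calc ENNReal.ofReal (b * m) * volume (Set.Icc (2⁻¹ : ℝ) (3/4))
        = ∫⁻ _ in Set.Icc (2⁻¹ : ℝ) (3/4), ENNReal.ofReal (b * m) :=
          (setLIntegral_const _ _).symm
      _ ≤ _ := setLIntegral_mono (betaOne_density_measurable b) key
  have hvol : volume (Set.Icc (2⁻¹ : ℝ) (3/4)) = ENNReal.ofReal (1/4) := by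
    rw [Real.volume_Icc]; norm_num
  refine lt_of_lt_of_le ?_ (le_trans h2 h1)
  rw [hvol]
  exact ENNReal.mul_pos (by simp [ENNReal.ofReal_pos, mul_pos hb hm_pos]) (by simp)

/-- Deterministic core: if all `x n ∈ [0,1]` and frequently `x n ≥ 1/2`, the stick-breaking
weights sum to 1. -/
lemma stick_breaking_det (x : ℕ → ℝ) (hx : ∀ n, x n ∈ Set.Icc (0 : ℝ) 1)
    (hfreq : ∃ᶠ n in Filter.atTop, (2⁻¹ : ℝ) ≤ x n) :
    (∑' i : ℕ, x i * ∏ n ∈ Finset.range i, (1 - x n)) = 1 := by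
  classical
  set P : ℕ → ℝ := fun N => ∏ n ∈ Finset.range N, (1 - x n) with hP
  have hfac_nonneg : ∀ n, 0 ≤ 1 - x n := fun n => by linarith [(hx n).2]
  have hfac_le_one : ∀ n, 1 - x n ≤ 1 := fun n => by linarith [(hx n).1]
  have hsum_eq : ∀ N, ∑ i ∈ Finset.range N, x i * ∏ n ∈ Finset.range i, (1 - x n)
      = 1 - P N := by
    intro N
    induction N with
    | zero => simp [hP]
    | succ N ih =>
      rw [Finset.sum_range_succ, ih]
      simp only [hP]
      rw [Finset.prod_range_succ]
      ring
  set c : ℕ → ℕ := fun N => ((Finset.range N).filter (fun n => (2⁻¹ : ℝ) ≤ x n)).card with hc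
  have hc_mono : Monotone c := by
    intro a b hab
    exact Finset.card_le_card (Finset.filter_subset_filter _
      (Finset.range_subset_range.mpr hab))
  have hc_top : Filter.Tendsto c Filter.atTop Filter.atTop := by
    apply Filter.tendsto_atTop_atTop_of_monotone hc_mono
    intro k
    induction k with
    | zero => exact ⟨0, Nat.zero_le _⟩
    | succ k ih =>
      obtain ⟨N, hN⟩ := ih
      obtain ⟨n, hnN, hn⟩ := (Filter.frequently_atTop.mp hfreq) N
      refine ⟨n + 1, ?_⟩
      have hins : insert n ((Finset.range N).filter (fun m => (2⁻¹ : ℝ) ≤ x m)) ⊆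
          (Finset.range (n + 1)).filter (fun m => (2⁻¹ : ℝ) ≤ x m) := by
        intro m hm
        rcases Finset.mem_insert.mp hm with rfl | hm
        · exact Finset.mem_filter.mpr ⟨Finset.mem_range.mpr (Nat.lt_succ_self _), hn⟩
        · obtain ⟨hm1, hm2⟩ := Finset.mem_filter.mp hm
          exact Finset.mem_filter.mpr
            ⟨Finset.mem_range.mpr (lt_of_lt_of_le (Finset.mem_range.mp hm1)
              (hnN.trans (Nat.le_succ n))), hm2⟩
      have hnotmem : n ∉ (Finset.range N).filter (fun m => (2⁻¹ : ℝ) ≤ x m) := by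
        intro h
        exact absurd (Finset.mem_range.mp (Finset.mem_filter.mp h).1) (not_lt.mpr hnN)
      calc k + 1 ≤ c N + 1 := Nat.add_le_add_right hN 1
        _ = (insert n ((Finset.range N).filter (fun m => (2⁻¹ : ℝ) ≤ x m))).card := by
            rw [Finset.card_insert_of_notMem hnotmem]
        _ ≤ c (n + 1) := Finset.card_le_card hins
  have hP_le : ∀ N, P N ≤ (2⁻¹ : ℝ) ^ c N := by
    intro N
    have hsplit := Finset.prod_filter_mul_prod_filter_not (Finset.range N)
      (fun n => (2⁻¹ : ℝ) ≤ x n) (fun n => 1 - x n)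
    have hA : ∏ n ∈ (Finset.range N).filter (fun n => (2⁻¹ : ℝ) ≤ x n), (1 - x n)
        ≤ (2⁻¹ : ℝ) ^ c N := by
      rw [hc, ← Finset.prod_const]
      exact Finset.prod_le_prod (fun n _ => hfac_nonneg n)
        (fun n hn => by linarith [(Finset.mem_filter.mp hn).2])
    have hB : ∏ n ∈ (Finset.range N).filter (fun n => ¬ (2⁻¹ : ℝ) ≤ x n), (1 - x n) ≤ 1 :=
      Finset.prod_le_one (fun n _ => hfac_nonneg n) (fun n _ => hfac_le_one n)
    have hAnn : 0 ≤ ∏ n ∈ (Finset.range N).filter (fun n => (2⁻¹ : ℝ) ≤ x n), (1 - x n) :=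
      Finset.prod_nonneg (fun n _ => hfac_nonneg n)
    have hBnn : 0 ≤ ∏ n ∈ (Finset.range N).filter (fun n => ¬ (2⁻¹ : ℝ) ≤ x n), (1 - x n) :=
      Finset.prod_nonneg (fun n _ => hfac_nonneg n)
    calc P N = _ * _ := hsplit.symm
      _ ≤ (2⁻¹ : ℝ) ^ c N * 1 := mul_le_mul hA hB hBnn (by positivity)
      _ = (2⁻¹ : ℝ) ^ c N := mul_one _
  have hP_nonneg : ∀ N, 0 ≤ P N := fun N => Finset.prod_nonneg (fun n _ => hfac_nonneg n)
  have hgeo : Filter.Tendsto (fun N => (2⁻¹ : ℝ) ^ c N) Filter.atTop (nhds 0) :=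
    (tendsto_pow_atTop_nhds_zero_of_lt_one (by norm_num) (by norm_num)).comp hc_top
  have hP_zero : Filter.Tendsto P Filter.atTop (nhds 0) :=
    squeeze_zero hP_nonneg hP_le hgeo
  have hpartial : Filter.Tendsto
      (fun N => ∑ i ∈ Finset.range N, x i * ∏ n ∈ Finset.range i, (1 - x n))
      Filter.atTop (nhds 1) := by
    simp_rw [hsum_eq]
    have := (tendsto_const_nhds (x := (1:ℝ)) (f := Filter.atTop)).sub hP_zero
    simpa using this
  have hterm_nonneg : ∀ i, 0 ≤ x i * ∏ n ∈ Finset.range i, (1 - x n) := fun i =>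
    mul_nonneg (hx i).1 (Finset.prod_nonneg (fun n _ => hfac_nonneg n))
  exact ((hasSum_iff_tendsto_nat_of_nonneg hterm_nonneg 1).mpr hpartial).tsum_eq

/-- **The agile stick-breaking weights sum to one almost surely.**
Fix `α > 0`, `κ ≥ 0` and an index `j` (0-indexed version of the sticks `(X_i)_{i ≥ 1}` and
the designated index `j ≥ 1`).  Let `(X_i)_{i ∈ ℕ}` be independent random variables on a
probability space `(Ω, μ)` such that `X i` has law `Beta(1, α + κ·δ(i = j))`.  Then the
agile stick-breaking weights `a i = X i * ∏_{n < i} (1 − X n)` satisfy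
`∑_{i=0}^∞ a i = 1` almost surely. -/
theorem agile_stick_breaking_sums_to_one
    (α κ : ℝ) (hα : 0 < α) (hκ : 0 ≤ κ) (j : ℕ)
    {Ω : Type*} [MeasurableSpace Ω] (μ : Measure Ω) [IsProbabilityMeasure μ]
    (X : ℕ → Ω → ℝ) (hXmeas : ∀ i, Measurable (X i))
    (hindep : iIndepFun X μ)
    (hlaw : ∀ i, Measure.map (X i) μ = betaOne (if i = j then α + κ else α)) :
    ∀ᵐ ω ∂μ, (∑' i : ℕ, X i ω * ∏ n ∈ Finset.range i, (1 - X n ω)) = 1 := by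
  -- a.s. every `X i` is in `[0,1]`
  have hbound : ∀ᵐ ω ∂μ, ∀ i, X i ω ∈ Set.Icc (0 : ℝ) 1 := by
    rw [MeasureTheory.ae_all_iff]
    intro i
    have : μ (X i ⁻¹' (Set.Icc (0:ℝ) 1)ᶜ) = 0 := by
      rw [← Measure.map_apply (hXmeas i) measurableSet_Icc.compl, hlaw i,
        betaOne_compl_Icc]
    filter_upwards [measure_eq_zero_iff_ae_notMem.mp this] with ω hω
    simpa using hω
  -- Borel–Cantelli: a.s. frequently `X n ≥ 1/2`
  set s : ℕ → Set Ω := fun n => X n ⁻¹' Set.Ici (2⁻¹ : ℝ) with hs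
  have hsm : ∀ n, MeasurableSet (s n) := fun n => (hXmeas n) measurableSet_Ici
  have hsindep : iIndepSet s μ := by
    rw [iIndepSet_iff_meas_biInter hsm]
    intro t
    exact hindep.meas_biInter (fun i _ => ⟨Set.Ici (2⁻¹ : ℝ), measurableSet_Ici, rfl⟩)
  have hsmeas : ∀ n, μ (s n) = betaOne (if n = j then α + κ else α) (Set.Ici (2⁻¹ : ℝ)) := by
    intro n
    rw [hs, ← Measure.map_apply (hXmeas n) measurableSet_Ici, hlaw n]
  have hsum_top : (∑' n, μ (s n)) = ⊤ := by
    set c0 : ℝ≥0∞ := min (betaOne α (Set.Ici (2⁻¹ : ℝ))) (betaOne (α + κ) (Set.Ici (2⁻¹ : ℝ)))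
      with hc0
    have hc0_pos : 0 < c0 :=
      lt_min (betaOne_Ici_pos hα) (betaOne_Ici_pos (by linarith))
    have hlb : ∀ n, c0 ≤ μ (s n) := by
      intro n
      rw [hsmeas n]
      by_cases h : n = j <;> simp [h, hc0, min_le_left, min_le_right]
    refine top_le_iff.mp ?_
    calc (⊤ : ℝ≥0∞) = ∑' _ : ℕ, c0 := (ENNReal.tsum_const_eq_top_of_ne_zero hc0_pos.ne').symm
      _ ≤ ∑' n, μ (s n) := ENNReal.tsum_le_tsum hlb
  have hlimsup := measure_limsup_eq_one hsm hsindep hsum_top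
  have hfreq : ∀ᵐ ω ∂μ, ∃ᶠ n in Filter.atTop, (2⁻¹ : ℝ) ≤ X n ω := by
    have : ∀ᵐ ω ∂μ, ω ∈ Filter.limsup s Filter.atTop := by
      rw [MeasureTheory.ae_iff]
      have hms : MeasurableSet (Filter.limsup s Filter.atTop) :=
        MeasurableSet.measurableSet_limsup (fun n => hsm n)
      show μ (Filter.limsup s Filter.atTop)ᶜ = 0
      rw [measure_compl hms (measure_ne_top μ _), measure_univ, hlimsup, tsub_self]
    filter_upwards [this] with ω hω
    exact Filter.mem_limsup_iff_frequently_mem.mp hω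
  filter_upwards [hbound, hfreq] with ω hω1 hω2
  exact stick_breaking_det (fun n => X n ω) hω1 hω2
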